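/- Let x ∈ ℝ^d satisfy the first-order optimality condition 2P_Ω(M − xxᵀ)x = λ∇R(x), and let i* = argmax_j |x_j|. Suppose the set S_{i*} = {j : (i*, j) ∈ Ω} of observed entries in row i* satisfies |S_{i*}| ≤ 2pd. Then ‖x‖_∞ ≤ 4·max{α, μ·√(p/λ)}. -/

import Mathlib

open Matrix Finset

noncomputable section

/-- Euclidean norm of a finite real vector. -/
def vnorm {n : ℕ} (x : Fin n → ℝ) : ℝ := Real.sqrt (∑ i, (x i) ^ 2)

/-- Outer product of two vectors, as a matrix. -/
def outer {n : ℕ} (x y : Fin n → ℝ) : Matrix (Fin n) (Fin n) ℝ := fun i j => x i * y j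

/-- `P_Ω` for a fixed (finite) set of observed entries. -/
def projF {d : ℕ} (Ω : Finset (Fin d × Fin d)) (A : Matrix (Fin d) (Fin d) ℝ) :
    Matrix (Fin d) (Fin d) ℝ :=
  fun i j => if (i, j) ∈ Ω then A i j else 0

/-- Gradient of the regularizer `R(x) = ∑ᵢ (|xᵢ| − α)⁴ 1_{|xᵢ| ≥ α}`. -/
def gradR {d : ℕ} (α : ℝ) (x : Fin d → ℝ) : Fin d → ℝ :=
  fun i => if α ≤ |x i| then 4 * (|x i| - α) ^ 3 * Real.sign (x i) else 0

/-- if `x` satisfies the first-order optimality condition and the row of the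
coordinate of largest absolute value has at most `2pd` observed entries, then
`‖x‖_∞ ≤ 4 max{α, μ√(p/λ)}`. -/
theorem stmt8 (d : ℕ) (hd : 0 < d) (μ α lam p : ℝ)
    (hμ : 0 < μ) (hα : 0 < α) (hlam : 0 < lam) (hp : 0 < p) (hp1 : p ≤ 1)
    (z : Fin d → ℝ) (hz : vnorm z = 1) (hzinf : ∀ i, |z i| ≤ μ / Real.sqrt d)
    (Ω : Finset (Fin d × Fin d)) (hsym : ∀ i j : Fin d, (i, j) ∈ Ω ↔ (j, i) ∈ Ω)
    (x : Fin d → ℝ)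
    (hfoc : (2 : ℝ) • (projF Ω (outer z z - outer x x)).mulVec x = lam • gradR α x)
    (istar : Fin d) (hmax : ∀ j, |x j| ≤ |x istar|)
    (hS : ((Finset.univ.filter fun j => (istar, j) ∈ Ω).card : ℝ) ≤ 2 * p * d) :
    ∀ j, |x j| ≤ 4 * max α (μ * Real.sqrt (p / lam)) := by

  intro j0
  by_contra hcon
  push_neg at hcon
  set B := |x istar| with hB
  set Mx := max α (μ * Real.sqrt (p / lam)) with hM
  have hMa : α ≤ Mx := le_max_left _ _
  have hMb : μ * Real.sqrt (p / lam) ≤ Mx := le_max_right _ _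
  have hBgt : 4 * Mx < B := lt_of_lt_of_le hcon (hmax j0)
  have hBpos : (0:ℝ) < B := by nlinarith
  have hxne : x istar ≠ 0 := by
    intro h; rw [hB, h, abs_zero] at hBpos; exact lt_irrefl 0 hBpos
  -- sign facts
  have hsx : x istar * Real.sign (x istar) = B := by
    rcases lt_or_gt_of_ne hxne with h | h
    · rw [Real.sign_of_neg h, hB, abs_of_neg h]; ring
    · rw [Real.sign_of_pos h, hB, abs_of_pos h]; ring
  have hss : Real.sign (x istar) * Real.sign (x istar) = 1 := by
    rcases lt_or_gt_of_ne hxne with h | h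
    · rw [Real.sign_of_neg h]; ring
    · rw [Real.sign_of_pos h]; ring
  have habs : |Real.sign (x istar)| = 1 := by
    rcases lt_or_gt_of_ne hxne with h | h
    · rw [Real.sign_of_neg h]; simp
    · rw [Real.sign_of_pos h]; simp
  have hdpos : (0:ℝ) < (d:ℝ) := by exact_mod_cast hd
  have hαB : α ≤ B := by nlinarith
  -- FOC at istar
  have h1 := congrFun hfoc istar
  simp only [Pi.smul_apply, smul_eq_mul, Matrix.mulVec, dotProduct, projF, outer,
    Matrix.sub_apply, gradR, if_pos hαB] at h1
  -- the term bound
  have hm0 : (0:ℝ) ≤ μ / Real.sqrt d := by positivity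
  have hmm : (μ / Real.sqrt d) * (μ / Real.sqrt d) = μ^2 / d := by
    rw [div_mul_div_comm, Real.mul_self_sqrt hdpos.le]; ring
  have hsum : ∑ j, ((if (istar, j) ∈ Ω then z istar * z j - x istar * x j else 0) * x j)
        * Real.sign (x istar)
      ≤ ∑ j, (if (istar, j) ∈ Ω then μ^2 / d * B else 0) := by
    apply Finset.sum_le_sum
    intro j _
    by_cases hj : (istar, j) ∈ Ω
    · simp only [if_pos hj]
      have h2 : |z j| ≤ μ / Real.sqrt d := hzinf j
      have h1' : |z istar| ≤ μ / Real.sqrt d := hzinf istar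
      have h3 : |x j| ≤ B := hmax j
      have e1 : z istar * z j * (x j * Real.sign (x istar))
          ≤ |z istar| * |z j| * (|x j| * 1) := by
        calc z istar * z j * (x j * Real.sign (x istar))
            ≤ |z istar * z j * (x j * Real.sign (x istar))| := le_abs_self _
          _ = |z istar| * |z j| * (|x j| * |Real.sign (x istar)|) := by
              rw [abs_mul, abs_mul, abs_mul]
          _ = |z istar| * |z j| * (|x j| * 1) := by rw [habs]
      have e2 : |z istar| * |z j| ≤ (μ / Real.sqrt d) * (μ / Real.sqrt d) :=
        mul_le_mul h1' h2 (abs_nonneg _) hm0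
      have e3 : |z istar| * |z j| * (|x j| * 1) ≤ (μ / Real.sqrt d) * (μ / Real.sqrt d) * B := by
        rw [mul_one]
        exact mul_le_mul e2 h3 (abs_nonneg _) (by positivity)
      have expand : (z istar * z j - x istar * x j) * x j * Real.sign (x istar)
          = z istar * z j * (x j * Real.sign (x istar))
            - x j ^ 2 * (x istar * Real.sign (x istar)) := by ring
      rw [expand, hsx]
      have e5 : (0:ℝ) ≤ x j ^ 2 * B := by positivity
      rw [hmm] at e3
      linarith
    · simp [hj]
  have hsum2 : ∑ j, (if (istar, j) ∈ Ω then μ^2 / d * B else 0)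
      = ((Finset.univ.filter fun j => (istar, j) ∈ Ω).card : ℝ) * (μ^2 / d * B) := by
    rw [← Finset.sum_filter, Finset.sum_const, nsmul_eq_mul]
  have hC : (0:ℝ) ≤ μ^2 / d * B := by positivity
  have hsum3 : ∑ j, ((if (istar, j) ∈ Ω then z istar * z j - x istar * x j else 0) * x j)
        * Real.sign (x istar) ≤ 2 * p * μ^2 * B := by
    have := mul_le_mul_of_nonneg_right hS hC
    rw [hsum2] at hsum
    have hcancel : 2 * p * (d:ℝ) * (μ^2 / d * B) = 2 * p * μ^2 * B := by
      field_simp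
    linarith [hsum, this, hcancel ▸ this]
  -- multiply FOC by sign
  have h2 : 2 * (∑ j, ((if (istar, j) ∈ Ω then z istar * z j - x istar * x j else 0) * x j)
        * Real.sign (x istar)) = 4 * lam * (B - α)^3 := by
    rw [← hB] at h1
    rw [← Finset.sum_mul]
    calc 2 * ((∑ j, (if (istar, j) ∈ Ω then z istar * z j - x istar * x j else 0) * x j)
          * Real.sign (x istar))
        = (2 * ∑ j, (if (istar, j) ∈ Ω then z istar * z j - x istar * x j else 0) * x j)
          * Real.sign (x istar) := by ring
      _ = lam * (4 * (B - α) ^ 3 * Real.sign (x istar)) * Real.sign (x istar) := by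
          rw [h1, if_pos hαB]
      _ = 4 * lam * (B - α)^3 * (Real.sign (x istar) * Real.sign (x istar)) := by ring
      _ = 4 * lam * (B - α)^3 := by rw [hss]; ring
  have hkey : 4 * lam * (B - α)^3 ≤ 4 * p * μ^2 * B := by
    rw [← h2]; linarith
  -- final contradiction
  set r := Real.sqrt (p / lam) with hr
  have hr0 : 0 ≤ r := Real.sqrt_nonneg _
  have hr2 : r ^ 2 = p / lam := Real.sq_sqrt (by positivity)
  have hpr : lam * r ^ 2 = p := by
    rw [hr2]; field_simp
  have hμr : μ * r < B / 4 := by linarith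
  have hαB' : α < B / 4 := by linarith
  have hcube : (3 * B / 4)^3 ≤ (B - α)^3 := by
    apply pow_le_pow_left₀ (by linarith) (by linarith)
  have hμr2 : (μ * r)^2 < (B / 4)^2 :=
    pow_lt_pow_left₀ hμr (by positivity) (by norm_num)
  have e6 : 4*lam*(3*B/4)^3 ≤ 4*lam*(B-α)^3 := by
    have := mul_le_mul_of_nonneg_left hcube (by positivity : (0:ℝ) ≤ 4*lam)
    linarith
  have e7 : 4*lam*((μ*r)^2*B) < 4*lam*((B/4)^2*B) := by
    apply mul_lt_mul_of_pos_left
    · exact mul_lt_mul_of_pos_right hμr2 hBpos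
    · positivity
  have e8 : 4*p*μ^2*B = 4*lam*((μ*r)^2*B) := by rw [← hpr]; ring
  have e9 : 4*lam*(3*B/4)^3 = 27/16*(lam*B^3) := by ring
  have e10 : 4*lam*((B/4)^2*B) = 1/4*(lam*B^3) := by ring
  have e11 : 0 < lam * B^3 := mul_pos hlam (pow_pos hBpos 3)
  linarith [hkey, e6, e7, e8, e9, e10, e11]
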